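/- arXiv:1205.1396 — 3 statements merged into one kernel-verified Lean document; each statement's English description precedes it below -/
import Mathlib

section
/- For real numbers a, b, c, d with d² = 1 + 2abc − a² − b² − c², the product (bc − a + id)(ac − b + id)(ab − c + id) equals (1/2)·(1−a)(1−b)(1−c)·(1 + a + b + c − id)² as complex numbers. -/
open Complex

/-- Factorization of the three-corner product for a spherical triangle:
`(bc - a + id)(ac - b + id)(ab - c + id) = ½(1-a)(1-b)(1-c)(1 + a + b + c - id)²`. -/
theorem spherical_triangle_product_factorization (a b c d : ℝ)
    (h : d ^ 2 = 1 + 2 * a * b * c - a ^ 2 - b ^ 2 - c ^ 2) :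
    ((b * c - a : ℂ) + d * I) * ((a * c - b : ℂ) + d * I) * ((a * b - c : ℂ) + d * I)
      = (1 / 2) * (1 - a : ℂ) * (1 - b : ℂ) * (1 - c : ℂ)
        * ((1 + a + b + c : ℂ) - d * I) ^ 2 := by
  have hC : (d : ℂ) ^ 2 = 1 + 2 * a * b * c - a ^ 2 - b ^ 2 - c ^ 2 := by
    exact_mod_cast congrArg (Complex.ofReal ·) h
  linear_combination ((-I) * d + (-(a*b+b*c+a*c) + (a+b+c)
      + (1/2) * (1-a) * (1-b) * (1-c)) : ℂ) * hC
    + ((1/2) * (d:ℂ)^2 * (a*b*c + b*c + a*b + a*c - a - b - c - 1) + (d:ℂ)^3 * I) * Complex.I_sq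
end

section
/- For θ ∈ (0, π/2) and γ ∈ [0, θ), the function Ω(θ, γ) = 2(arccos(sinγ/sinθ) − cosθ·arccos(tanγ/tanθ)) satisfies 0 ≤ Ω(θ, γ) ≤ 2π(1 − cosθ), and Ω(θ, γ) → 0 as γ → θ. -/
open Real

private lemma cap_aux_hasDeriv {θ γ : ℝ} (hθ2 : θ < π / 2) (hγ0 : 0 < γ) (hγθ : γ < θ) :
    HasDerivAt (fun x => Real.arccos (Real.sin x / Real.sin θ)
        - Real.cos θ * Real.arccos (Real.tan x / Real.tan θ))
      ((Real.cos θ ^ 2 - Real.cos γ ^ 2) /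
        (Real.cos γ * Real.sqrt (Real.sin θ ^ 2 - Real.sin γ ^ 2))) γ := by
  have hθ0 : 0 < θ := hγ0.trans hγθ
  have hsθ : 0 < Real.sin θ := Real.sin_pos_of_pos_of_lt_pi hθ0 (by linarith [Real.pi_pos])
  have hcθ : 0 < Real.cos θ := Real.cos_pos_of_mem_Ioo ⟨by linarith, hθ2⟩
  have hcγ : 0 < Real.cos γ := Real.cos_pos_of_mem_Ioo ⟨by linarith, by linarith⟩
  have hsγ : 0 < Real.sin γ := Real.sin_pos_of_pos_of_lt_pi hγ0 (by linarith [Real.pi_pos])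
  have hsγθ : Real.sin γ < Real.sin θ :=
    Real.strictMonoOn_sin ⟨by linarith [Real.pi_pos], by linarith⟩
      ⟨by linarith [Real.pi_pos], by linarith⟩ hγθ
  have hcθγ : Real.cos θ < Real.cos γ :=
    Real.strictAntiOn_cos ⟨by linarith, by linarith [Real.pi_pos]⟩
      ⟨by linarith, by linarith [Real.pi_pos]⟩ hγθ
  have htθ : 0 < Real.tan θ := Real.tan_pos_of_pos_of_lt_pi_div_two hθ0 hθ2
  have htγ : 0 < Real.tan γ := Real.tan_pos_of_pos_of_lt_pi_div_two hγ0 (by linarith)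
  have htγθ : Real.tan γ < Real.tan θ :=
    Real.tan_lt_tan_of_nonneg_of_lt_pi_div_two hγ0.le hθ2 hγθ
  have hD : 0 < Real.sin θ ^ 2 - Real.sin γ ^ 2 := by nlinarith
  have hR : 0 < Real.sqrt (Real.sin θ ^ 2 - Real.sin γ ^ 2) := Real.sqrt_pos.mpr hD
  set s : ℝ := Real.sin γ / Real.sin θ with hs_def
  set t : ℝ := Real.tan γ / Real.tan θ with ht_def
  have hs0 : 0 < s := div_pos hsγ hsθ
  have hs1 : s < 1 := (div_lt_one hsθ).mpr hsγθ
  have ht0 : 0 < t := div_pos htγ htθ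
  have ht1 : t < 1 := (div_lt_one htθ).mpr htγθ
  have h1s : Real.sqrt (1 - s ^ 2)
      = Real.sqrt (Real.sin θ ^ 2 - Real.sin γ ^ 2) / Real.sin θ := by
    rw [show (1 : ℝ) - s ^ 2 = (Real.sin θ ^ 2 - Real.sin γ ^ 2) / Real.sin θ ^ 2 by
      rw [hs_def]; field_simp]
    rw [Real.sqrt_div hD.le, Real.sqrt_sq hsθ.le]
  have h1t : Real.sqrt (1 - t ^ 2)
      = Real.sqrt (Real.sin θ ^ 2 - Real.sin γ ^ 2) / (Real.sin θ * Real.cos γ) := by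
    have hsq : (1 : ℝ) - t ^ 2
        = (Real.sin θ ^ 2 - Real.sin γ ^ 2) / (Real.sin θ * Real.cos γ) ^ 2 := by
      rw [ht_def, Real.tan_eq_sin_div_cos, Real.tan_eq_sin_div_cos]
      have h1 := Real.sin_sq_add_cos_sq γ
      have h2 := Real.sin_sq_add_cos_sq θ
      field_simp
      linear_combination Real.sin θ ^ 2 * h1 - Real.sin γ ^ 2 * h2

    rw [hsq, Real.sqrt_div hD.le, Real.sqrt_sq (by positivity)]
  have dA : HasDerivAt (fun x => Real.arccos (Real.sin x / Real.sin θ))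
      (-(1 / Real.sqrt (1 - s ^ 2)) * (Real.cos γ / Real.sin θ)) γ := by
    have h := (Real.hasDerivAt_arccos (by linarith) hs1.ne).comp γ
      ((Real.hasDerivAt_sin γ).div_const (Real.sin θ))
    exact h
  have dB : HasDerivAt (fun x => Real.arccos (Real.tan x / Real.tan θ))
      (-(1 / Real.sqrt (1 - t ^ 2)) * (1 / Real.cos γ ^ 2 / Real.tan θ)) γ := by
    have h := (Real.hasDerivAt_arccos (by linarith) ht1.ne).comp γ
      ((Real.hasDerivAt_tan hcγ.ne').div_const (Real.tan θ))
    exact h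
  have := dA.sub (dB.const_mul (Real.cos θ))
  refine this.congr_deriv ?_
  rw [h1s, h1t, Real.tan_eq_sin_div_cos]
  field_simp
  ring

private lemma cap_aux_anti {θ : ℝ} (hθ0 : 0 < θ) (hθ2 : θ < π / 2) :
    AntitoneOn (fun x => Real.arccos (Real.sin x / Real.sin θ)
        - Real.cos θ * Real.arccos (Real.tan x / Real.tan θ)) (Set.Icc 0 θ) := by
  have hcont : ContinuousOn (fun x => Real.arccos (Real.sin x / Real.sin θ)
      - Real.cos θ * Real.arccos (Real.tan x / Real.tan θ)) (Set.Icc 0 θ) := by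
    apply ContinuousOn.sub
    · exact Real.continuous_arccos.comp_continuousOn
        ((Real.continuous_sin.continuousOn).div_const _)
    · apply ContinuousOn.mul continuousOn_const
      apply Real.continuous_arccos.comp_continuousOn
      apply ContinuousOn.div_const
      intro x hx
      have hcx : 0 < Real.cos x :=
        Real.cos_pos_of_mem_Ioo ⟨by linarith [hx.1, Real.pi_pos], by linarith [hx.2]⟩
      exact (Real.continuousAt_tan.mpr hcx.ne').continuousWithinAt
  apply antitoneOn_of_deriv_nonpos (convex_Icc 0 θ) hcont
  · rw [interior_Icc]
    intro x hx
    exact (cap_aux_hasDeriv hθ2 hx.1 hx.2).differentiableAt.differentiableWithinAt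
  · rw [interior_Icc]
    intro x hx
    rw [(cap_aux_hasDeriv hθ2 hx.1 hx.2).deriv]
    apply div_nonpos_of_nonpos_of_nonneg
    · have hcθγ : Real.cos θ < Real.cos x :=
        Real.strictAntiOn_cos ⟨hx.1.le, by linarith [Real.pi_pos, hx.2]⟩
          ⟨by linarith [hx.1], by linarith [Real.pi_pos]⟩ hx.2
      have hcθ : 0 < Real.cos θ := Real.cos_pos_of_mem_Ioo ⟨by linarith, hθ2⟩
      nlinarith
    · have hcx : 0 < Real.cos x :=
        Real.cos_pos_of_mem_Ioo ⟨by linarith [hx.1], by linarith [hx.2]⟩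
      exact mul_nonneg hcx.le (Real.sqrt_nonneg _)

/-- Bounds and limit of the cap-segment solid angle
`Ω(θ, γ) = 2(arccos(sin γ/sin θ) - cos θ · arccos(tan γ/tan θ))`:
it lies in `[0, 2π(1 - cos θ)]` on `γ ∈ [0, θ)` and tends to `0` as `γ → θ⁻`. -/
theorem cap_segment_bounds_and_limit (θ : ℝ) (hθ : θ ∈ Set.Ioo 0 (π / 2)) :
    (∀ γ ∈ Set.Ico (0 : ℝ) θ,
      0 ≤ 2 * (Real.arccos (Real.sin γ / Real.sin θ)
            - Real.cos θ * Real.arccos (Real.tan γ / Real.tan θ)) ∧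
      2 * (Real.arccos (Real.sin γ / Real.sin θ)
            - Real.cos θ * Real.arccos (Real.tan γ / Real.tan θ))
        ≤ 2 * π * (1 - Real.cos θ)) ∧
    Filter.Tendsto (fun γ : ℝ =>
        2 * (Real.arccos (Real.sin γ / Real.sin θ)
          - Real.cos θ * Real.arccos (Real.tan γ / Real.tan θ)))
      (nhdsWithin θ (Set.Iio θ)) (nhds 0) := by
  obtain ⟨hθ0, hθ2⟩ := hθ
  have hsθ : 0 < Real.sin θ := Real.sin_pos_of_pos_of_lt_pi hθ0 (by linarith [Real.pi_pos])
  have hcθ : 0 < Real.cos θ := Real.cos_pos_of_mem_Ioo ⟨by linarith, hθ2⟩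
  have hcθ1 : Real.cos θ < 1 := by
    have := Real.strictAntiOn_cos (Set.left_mem_Icc.mpr (by linarith [Real.pi_pos]))
      ⟨hθ0.le, by linarith [Real.pi_pos]⟩ hθ0
    simpa using this
  have htθ : 0 < Real.tan θ := Real.tan_pos_of_pos_of_lt_pi_div_two hθ0 hθ2
  have hfθ : Real.arccos (Real.sin θ / Real.sin θ)
      - Real.cos θ * Real.arccos (Real.tan θ / Real.tan θ) = 0 := by
    rw [div_self hsθ.ne', div_self htθ.ne', Real.arccos_one]
    ring
  constructor
  · intro γ hγ
    obtain ⟨hγ0, hγθ⟩ := hγ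
    have hsγθ : Real.sin γ ≤ Real.sin θ := by
      have := Real.strictMonoOn_sin ⟨by linarith [Real.pi_pos], by linarith⟩
        ⟨by linarith [Real.pi_pos], by linarith⟩ hγθ
      linarith
    have hcγ : 0 < Real.cos γ :=
      Real.cos_pos_of_mem_Ioo ⟨by linarith [Real.pi_pos], by linarith⟩
    have hsγ0 : 0 ≤ Real.sin γ :=
      Real.sin_nonneg_of_nonneg_of_le_pi hγ0 (by linarith [Real.pi_pos])
    have htγ : 0 ≤ Real.tan γ := by
      rw [Real.tan_eq_sin_div_cos]; exact div_nonneg hsγ0 hcγ.le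
    have hcθγ : Real.cos θ ≤ Real.cos γ := by
      rcases eq_or_lt_of_le hγ0 with h | h
      · rw [← h]; simpa using Real.cos_le_one θ
      · exact (Real.strictAntiOn_cos ⟨hγ0, by linarith [Real.pi_pos]⟩
          ⟨by linarith, by linarith [Real.pi_pos]⟩ hγθ).le
    constructor
    · have := cap_aux_anti hθ0 hθ2 ⟨hγ0, hγθ.le⟩
        (Set.right_mem_Icc.mpr hθ0.le) hγθ.le
      simp only [hfθ] at this
      linarith
    · -- upper bound
      have hts : Real.tan γ / Real.tan θ ≤ Real.sin γ / Real.sin θ := by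
        rw [Real.tan_eq_sin_div_cos, Real.tan_eq_sin_div_cos,
          show Real.sin γ / Real.cos γ / (Real.sin θ / Real.cos θ)
            = Real.sin γ * Real.cos θ / (Real.cos γ * Real.sin θ) by
              field_simp]
        rw [div_le_div_iff₀ (by positivity) hsθ]
        nlinarith [mul_le_mul_of_nonneg_left hcθγ (mul_nonneg hsγ0 hsθ.le)]
      have hA : Real.arccos (Real.sin γ / Real.sin θ) ≤ π / 2 :=
        Real.arccos_le_pi_div_two.mpr (by positivity)
      have hAB : Real.arccos (Real.sin γ / Real.sin θ)
          ≤ Real.arccos (Real.tan γ / Real.tan θ) := by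
        rw [Real.arccos_eq_pi_div_two_sub_arcsin, Real.arccos_eq_pi_div_two_sub_arcsin]
        have := Real.monotone_arcsin hts
        linarith
      have hA0 : 0 ≤ Real.arccos (Real.sin γ / Real.sin θ) := Real.arccos_nonneg _
      nlinarith [Real.pi_pos]
  · have hcontθ : ContinuousAt (fun γ : ℝ => 2 * (Real.arccos (Real.sin γ / Real.sin θ)
        - Real.cos θ * Real.arccos (Real.tan γ / Real.tan θ))) θ := by
      apply ContinuousAt.mul continuousAt_const
      apply ContinuousAt.sub
      · exact Real.continuous_arccos.continuousAt.comp
          ((Real.continuous_sin.continuousAt).div_const _)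
      · exact continuousAt_const.mul (Real.continuous_arccos.continuousAt.comp
          ((Real.continuousAt_tan.mpr hcθ.ne').div_const _))
    have h0 : 2 * (Real.arccos (Real.sin θ / Real.sin θ)
        - Real.cos θ * Real.arccos (Real.tan θ / Real.tan θ)) = 0 := by
      rw [hfθ]; ring
    have hT := hcontθ.tendsto.mono_left
      (nhdsWithin_le_nhds (s := Set.Iio θ))
    rw [h0] at hT
    exact hT
end

section
/- Let θ₁, θ₂ ∈ (0, π/2) with θ₁ + θ₂ < π and α ∈ (0, π), and define tanγ₁ = (cosθ₂ − cosα·cosθ₁)/(sinα·cosθ₁) with γ₁ ∈ (−π/2, π/2). If α ≥ θ₁ + θ₂ (cones with disjoint interiors) then γ₁ ≥ θ₁; if α ≤ |θ₁ − θ₂| with θ₂ ≥ θ₁ (cone 1 inside cone 2) then γ₁ ≤ −θ₁. -/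
open Real

/-- Degenerate configurations of two intersecting cones: if the cones have
disjoint interiors (`α ≥ θ₁ + θ₂`) then `γ₁ ≥ θ₁`; if cone 1 lies inside cone 2
(`α ≤ θ₂ - θ₁` with `θ₁ ≤ θ₂`) then `γ₁ ≤ -θ₁`. -/
theorem cone_intersection_degenerate_cases (α θ₁ θ₂ γ₁ : ℝ)
    (hθ₁ : θ₁ ∈ Set.Ioo 0 (π / 2)) (hθ₂ : θ₂ ∈ Set.Ioo 0 (π / 2))
    (hθθ : θ₁ + θ₂ < π) (hα : α ∈ Set.Ioo 0 π)
    (hγ₁ : γ₁ ∈ Set.Ioo (-(π / 2)) (π / 2))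
    (htan : Real.tan γ₁
      = (Real.cos θ₂ - Real.cos α * Real.cos θ₁) / (Real.sin α * Real.cos θ₁)) :
    (θ₁ + θ₂ ≤ α → θ₁ ≤ γ₁) ∧ (θ₁ ≤ θ₂ → α ≤ θ₂ - θ₁ → γ₁ ≤ -θ₁) := by
  obtain ⟨hθ₁0, hθ₁2⟩ := hθ₁
  obtain ⟨hθ₂0, hθ₂2⟩ := hθ₂
  obtain ⟨hα0, hαπ⟩ := hα
  have hπ := Real.pi_pos
  have hsα : 0 < Real.sin α := Real.sin_pos_of_pos_of_lt_pi hα0 hαπ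
  have hcθ₁ : 0 < Real.cos θ₁ := Real.cos_pos_of_mem_Ioo ⟨by linarith, hθ₁2⟩
  have hsθ₁ : 0 < Real.sin θ₁ := Real.sin_pos_of_pos_of_lt_pi hθ₁0 (by linarith)
  have hden : 0 < Real.sin α * Real.cos θ₁ := mul_pos hsα hcθ₁
  constructor
  · intro h
    have h1 : Real.cos (α - θ₁) ≤ Real.cos θ₂ :=
      Real.cos_le_cos_of_nonneg_of_le_pi (le_of_lt hθ₂0) (by linarith) (by linarith)
    have htan1 : Real.tan θ₁ ≤ Real.tan γ₁ := by
      rw [htan, Real.tan_eq_sin_div_cos, div_le_div_iff₀ hcθ₁ hden]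
      have hc := Real.cos_sub α θ₁
      nlinarith
    by_contra hc
    push_neg at hc
    have := Real.strictMonoOn_tan ⟨hγ₁.1, hγ₁.2⟩ ⟨by linarith, hθ₁2⟩ hc
    linarith
  · intro hle h
    have h1 : Real.cos θ₂ ≤ Real.cos (α + θ₁) :=
      Real.cos_le_cos_of_nonneg_of_le_pi (by linarith) (by linarith) (by linarith)
    have htan1 : Real.tan γ₁ ≤ Real.tan (-θ₁) := by
      rw [htan, Real.tan_neg, Real.tan_eq_sin_div_cos, ← neg_div,
        div_le_div_iff₀ hden hcθ₁]
      have hc := Real.cos_add α θ₁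
      nlinarith
    by_contra hc
    push_neg at hc
    have := Real.strictMonoOn_tan ⟨by linarith, by linarith⟩ ⟨hγ₁.1, hγ₁.2⟩ hc
    linarith
end
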